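/- arXiv:1706.08228 — 3 statements merged into one kernel-verified Lean document; each statement's English description precedes it below -/
import Mathlib

section
/- As an additive subgroup of R = ℤ × ℤ[√2] × ℤ[√3], the subring W has index 8, i.e. the quotient group R/W has exactly 8 elements. -/
abbrev Rng : Type := ℤ × Zsqrtd 2 × Zsqrtd 3

def Wset : Set Rng :=
  {p | p.1 ≡ p.2.1.re [ZMOD 2] ∧ p.1 ≡ p.2.2.re + p.2.2.im [ZMOD 2] ∧
       p.2.1.im ≡ p.2.2.im [ZMOD 2]}

private lemma modeq_iff (a b : ℤ) : a ≡ b [ZMOD 2] ↔ ((a : ZMod 2) = b) :=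
  (ZMod.intCast_eq_intCast_iff a b 2).symm

def W : Subring Rng where
  carrier := Wset
  zero_mem' := by refine ⟨?_, ?_, ?_⟩ <;> decide
  one_mem' := by refine ⟨?_, ?_, ?_⟩ <;> decide
  add_mem' := by
    rintro a b ⟨h1, h2, h3⟩ ⟨g1, g2, g3⟩
    refine ⟨h1.add g1, ?_, h3.add g3⟩
    simpa [add_add_add_comm] using h2.add g2
  neg_mem' := by
    rintro a ⟨h1, h2, h3⟩
    refine ⟨h1.neg, ?_, h3.neg⟩
    have := h2.neg
    simp only [Wset, Set.mem_setOf_eq, Prod.fst_neg, Prod.snd_neg, Zsqrtd.re_neg,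
      Zsqrtd.im_neg, Int.modEq_iff_dvd] at this ⊢
    omega
  mul_mem' := by
    rintro a b ⟨h1, h2, h3⟩ ⟨g1, g2, g3⟩
    simp only [Wset, Set.mem_setOf_eq, Prod.fst_mul, Prod.snd_mul, Zsqrtd.re_mul,
      Zsqrtd.im_mul, modeq_iff] at h1 h2 h3 g1 g2 g3 ⊢
    push_cast at h1 h2 h3 g1 g2 g3 ⊢
    have h0 : (2 : ZMod 2) = 0 := rfl
    refine ⟨?_, ?_, ?_⟩
    · rw [← h1, ← g1, h0]; ring
    · linear_combination (b.1 : ZMod 2) * h2 + ((a.2.2.re : ZMod 2) + a.2.2.im) * g2 -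
        ((a.2.2.im : ZMod 2) * b.2.2.im) * h0
    · linear_combination (b.2.1.im : ZMod 2) * h2 - (b.2.1.im : ZMod 2) * h1
        + (b.2.1.re : ZMod 2) * h3 + ((a.2.2.re : ZMod 2) + a.2.2.im) * g3
        + (a.2.2.im : ZMod 2) * g2 - (a.2.2.im : ZMod 2) * g1
        + ((a.2.2.im : ZMod 2) * b.2.2.im) * h0

lemma mem_W_iff (x : Rng) : x ∈ W ↔ x ∈ Wset := Iff.rfl

def phi : Rng →+ ZMod 2 × ZMod 2 × ZMod 2 where
  toFun p := ((p.1 : ZMod 2) - p.2.1.re, (p.1 : ZMod 2) - p.2.2.re - p.2.2.im,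
    (p.2.1.im : ZMod 2) - p.2.2.im)
  map_zero' := by simp
  map_add' a b := by
    simp only [Prod.fst_add, Prod.snd_add, Zsqrtd.re_add, Zsqrtd.im_add, Prod.mk_add_mk]
    push_cast
    refine Prod.ext ?_ (Prod.ext ?_ ?_) <;> ring

lemma phi_surj : Function.Surjective phi := by
  rintro ⟨x, y, z⟩
  refine ⟨(0, ⟨-(x.val : ℤ), z.val⟩, ⟨-(y.val : ℤ), 0⟩), ?_⟩
  simp [phi, ZMod.natCast_val, ZMod.cast_id]

lemma ker_phi : phi.ker = W.toAddSubgroup := by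
  ext p
  simp only [AddMonoidHom.mem_ker, Subring.mem_toAddSubgroup, mem_W_iff, Wset,
    Set.mem_setOf_eq, phi, AddMonoidHom.coe_mk, ZeroHom.coe_mk, Prod.mk_eq_zero, modeq_iff,
    sub_eq_zero, push_cast]
  constructor
  · rintro ⟨h1, h2, h3⟩
    refine ⟨h1, by push_cast; linear_combination h2, h3⟩
  · rintro ⟨h1, h2, h3⟩
    push_cast at h2
    exact ⟨h1, by linear_combination h2, h3⟩

/-- As an additive subgroup of `R = ℤ × ℤ[√2] × ℤ[√3]`, the subring `W` has index `8`:
the quotient group `R/W` has exactly `8` elements. -/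
theorem stmt2 : Nat.card (Rng ⧸ W.toAddSubgroup) = 8 := by
  rw [← ker_phi]
  rw [Nat.card_congr (QuotientAddGroup.quotientKerEquivOfSurjective phi phi_surj).toEquiv]
  simp [Nat.card_eq_fintype_card]
end

section
/- Every maximal ideal of R = ℤ × ℤ[√2] × ℤ[√3] of odd residue characteristic admits a generator lying in W. Precisely: if m is a maximal ideal of R with (2, 2, 2) ∉ m, then there exists θ ∈ W such that m is the ideal of R generated by θ. -/
section Aux

lemma nonsq (d : ℤ) (hd2 : 2 ≤ d) (hd3 : d ≤ 3) : ∀ n : ℤ, d ≠ n * n := by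
  intro n h
  have h' : n.natAbs * n.natAbs = d.natAbs := by
    rw [← Int.natAbs_mul, ← h]
  rcases Nat.lt_or_ge n.natAbs 2 with hl | hg
  · interval_cases h'' : n.natAbs <;> omega
  · have := Nat.mul_le_mul hg hg; omega

lemma round_bound (n u : ℤ) (hn : n ≠ 0) :
    (2 * (u - round ((u : ℚ) / n) * n))^2 ≤ n^2 := by
  have hnq : (n : ℚ) ≠ 0 := Int.cast_ne_zero.mpr hn
  set q : ℤ := round ((u : ℚ) / n) with hq
  have h : |(u : ℚ)/n - q| ≤ 1/2 := abs_sub_round _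
  have h2 : |(u : ℚ) - q * n| ≤ |(n:ℚ)| / 2 := by
    have hmul := mul_le_mul_of_nonneg_right h (abs_nonneg (n:ℚ))
    rw [← abs_mul, sub_mul, div_mul_cancel₀ _ hnq] at hmul
    linarith [hmul]
  have h3 : ((2 * (u - q * n) : ℤ) : ℚ)^2 ≤ ((n : ℤ) : ℚ)^2 := by
    push_cast
    have hnn := abs_nonneg ((u:ℚ) - q * n)
    nlinarith [sq_abs ((u:ℚ) - q * n), sq_abs (n:ℚ)]
  exact_mod_cast h3

lemma zsqrtd_div {d : ℤ} (hd0 : 0 < d) (hd3 : d ≤ 3) (hns : ∀ n : ℤ, d ≠ n * n)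
    (a b : Zsqrtd d) (hb : b ≠ 0) :
    ∃ q : Zsqrtd d, ((a - b * q).norm).natAbs < (b.norm).natAbs := by
  have hn : b.norm ≠ 0 := fun h => hb ((Zsqrtd.norm_eq_zero hns b).mp h)
  set n : ℤ := b.norm with hndef
  set u : ℤ := (a * star b).re with hu
  set v : ℤ := (a * star b).im with hv
  set q1 : ℤ := round ((u : ℚ) / n) with hq1
  set q2 : ℤ := round ((v : ℚ) / n) with hq2
  have hb1 := round_bound n u hn
  have hb2 := round_bound n v hn
  rw [← hq1] at hb1
  rw [← hq2] at hb2
  refine ⟨⟨q1, q2⟩, ?_⟩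
  have hmul : (a - b * ⟨q1, q2⟩).norm * n = (u - q1*n)^2 - d*(v - q2*n)^2 := by
    simp only [hndef, hu, hv, Zsqrtd.norm_def, Zsqrtd.re_sub, Zsqrtd.im_sub,
      Zsqrtd.re_mul, Zsqrtd.im_mul, Zsqrtd.re_star, Zsqrtd.im_star]
    ring
  have h0 : 0 < n^2 := lt_of_le_of_ne (sq_nonneg n) (Ne.symm (pow_ne_zero 2 hn))
  set rn : ℤ := (a - b * ⟨q1, q2⟩).norm with hrn
  have hA : 4 * (rn * n) ≤ 3 * n^2 := by
    nlinarith [hmul, hb1, mul_nonneg hd0.le (sq_nonneg (v - q2*n)), sq_nonneg n]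
  have hB : -(3 * n^2) ≤ 4 * (rn * n) := by
    nlinarith [hmul, hb2, sq_nonneg (u - q1*n), sq_nonneg (v - q2*n), hd3, hd0]
  have hprod : 0 ≤ (3*n^2 - 4*(rn*n)) * (3*n^2 + 4*(rn*n)) :=
    mul_nonneg (by linarith) (by linarith)
  have hsq : rn^2 < n^2 := by nlinarith [hprod, h0, mul_pos h0 h0]
  have habs : |rn| < |n| := by
    rcases abs_cases rn with ⟨e1, e2⟩ | ⟨e1, e2⟩ <;> rcases abs_cases n with ⟨f1, f2⟩ | ⟨f1, f2⟩ <;>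
      rw [e1, f1] <;> nlinarith [hsq]
  rw [Int.abs_eq_natAbs, Int.abs_eq_natAbs] at habs
  exact_mod_cast habs

lemma zsqrtd_principal {d : ℤ} (hd0 : 0 < d) (hd3 : d ≤ 3) (hns : ∀ n : ℤ, d ≠ n * n)
    (I : Ideal (Zsqrtd d)) : ∃ g, I = Ideal.span {g} := by
  by_cases hI : I = ⊥
  · exact ⟨0, by rw [hI, eq_comm, Ideal.span_singleton_eq_bot]⟩
  obtain ⟨x0, hx0I, hx0⟩ := Submodule.exists_mem_ne_zero_of_ne_bot hI
  set S : Set ℕ := {k | ∃ x, x ∈ I ∧ x ≠ 0 ∧ x.norm.natAbs = k} with hS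
  have hSne : S.Nonempty := ⟨_, x0, hx0I, hx0, rfl⟩
  obtain ⟨g, hgI, hg0, hgmin⟩ : ∃ g, g ∈ I ∧ g ≠ 0 ∧ g.norm.natAbs = sInf S := Nat.sInf_mem hSne
  refine ⟨g, le_antisymm ?_ (Ideal.span_le.mpr (Set.singleton_subset_iff.mpr hgI))⟩
  intro x hx
  obtain ⟨q, hq⟩ := zsqrtd_div hd0 hd3 hns x g hg0
  by_cases hr : x - g * q = 0
  · exact Ideal.mem_span_singleton.mpr ⟨q, sub_eq_zero.mp hr⟩
  · exfalso
    have hmem : (x - g*q).norm.natAbs ∈ S := ⟨_, I.sub_mem hx (I.mul_mem_right q hgI), hr, rfl⟩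
    have := Nat.sInf_le hmem
    omega

lemma isMaximal_prod_left {R S : Type*} [CommRing R] [CommRing S] {p : Ideal R}
    (h : (Ideal.prod p (⊤ : Ideal S)).IsMaximal) : p.IsMaximal := by
  refine ⟨⟨fun hp => h.ne_top (by rw [hp, Ideal.prod_top_top]), fun J hJ => ?_⟩⟩
  have hle : Ideal.prod p (⊤ : Ideal S) ≤ Ideal.prod J ⊤ := by
    rintro ⟨x1, x2⟩ hx
    exact ⟨hJ.le hx.1, trivial⟩
  have hne : Ideal.prod p (⊤ : Ideal S) ≠ Ideal.prod J ⊤ :=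
    fun hEq => hJ.ne ((Ideal.prod_inj.mp hEq).1)
  have htop := h.1.2 _ (lt_of_le_of_ne hle hne)
  rw [← Ideal.prod_top_top] at htop
  exact (Ideal.prod_inj.mp htop).1

lemma isMaximal_prod_right {R S : Type*} [CommRing R] [CommRing S] {q : Ideal S}
    (h : (Ideal.prod (⊤ : Ideal R) q).IsMaximal) : q.IsMaximal := by
  refine ⟨⟨fun hp => h.ne_top (by rw [hp, Ideal.prod_top_top]), fun J hJ => ?_⟩⟩
  have hle : Ideal.prod (⊤ : Ideal R) q ≤ Ideal.prod ⊤ J := by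
    rintro ⟨x1, x2⟩ hx
    exact ⟨trivial, hJ.le hx.2⟩
  have hne : Ideal.prod (⊤ : Ideal R) q ≠ Ideal.prod ⊤ J :=
    fun hEq => hJ.ne ((Ideal.prod_inj.mp hEq).2)
  have htop := h.1.2 _ (lt_of_le_of_ne hle hne)
  rw [← Ideal.prod_top_top] at htop
  exact (Ideal.prod_inj.mp htop).2

end Aux

/-- Every maximal ideal of `R = ℤ × ℤ[√2] × ℤ[√3]` of odd residue characteristic admits a
generator lying in `W`: if `m` is a maximal ideal of `R` with `(2,2,2) ∉ m`, then there is
`θ ∈ W` with `m = θ·R`. -/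
theorem stmt5 (m : Ideal Rng) (hm : m.IsMaximal)
    (h2 : (((2 : ℤ), (2 : Zsqrtd 2), (2 : Zsqrtd 3)) : Rng) ∉ m) :
    ∃ θ : Rng, θ ∈ W ∧ m = Ideal.span {θ} := by
  have hns2 : ∀ n : ℤ, (2:ℤ) ≠ n * n := nonsq 2 (by norm_num) (by norm_num)
  have hns3 : ∀ n : ℤ, (3:ℤ) ≠ n * n := nonsq 3 (by norm_num) (by norm_num)
  rcases (Ideal.ideal_prod_prime m).mp hm.isPrime with ⟨p, hp, rfl⟩ | ⟨q, hq, rfl⟩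
  · -- residue characteristic from the ℤ factor
    have hpm : p.IsMaximal := isMaximal_prod_left hm
    obtain ⟨g, hg⟩ := (IsPrincipalIdealRing.principal p).principal
    have h2p : (2:ℤ) ∉ p := fun hc => h2 ⟨hc, trivial⟩
    have hodd : ¬ Even g := by
      rintro ⟨r, hr⟩
      have hle : p ≤ Ideal.span {(2:ℤ)} := by
        rw [hg]
        exact Ideal.span_le.mpr (Set.singleton_subset_iff.mpr
          (Ideal.mem_span_singleton.mpr ⟨r, by omega⟩))
      have hne : Ideal.span {(2:ℤ)} ≠ ⊤ := by
        rw [Ne, Ideal.span_singleton_eq_top, Int.isUnit_iff]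
        omega
      have hPe := hpm.eq_of_le hne hle
      exact h2p (hPe ▸ Ideal.mem_span_singleton_self 2)
    obtain ⟨r, hr⟩ := Int.not_even_iff_odd.mp hodd
    refine ⟨((g, 1, 1) : Rng), ?_, ?_⟩
    · refine (mem_W_iff _).mpr ⟨?_, ?_, ?_⟩ <;>
        simp only [Zsqrtd.re_one, Zsqrtd.im_one] <;> rw [Int.modEq_iff_dvd] <;> omega
    · ext x
      rw [Ideal.mem_span_singleton]
      constructor
      · rintro ⟨h1, -⟩
        obtain ⟨t, ht⟩ := Ideal.mem_span_singleton.mp (hg ▸ h1)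
        exact ⟨(t, x.2.1, x.2.2), by simp [Prod.ext_iff, show x.1 = g * t from ht]⟩
      · rintro ⟨c, hc⟩
        refine ⟨?_, trivial⟩
        rw [hg]
        exact Ideal.mem_span_singleton.mpr ⟨c.1, by simp [hc]⟩
  · rcases (Ideal.ideal_prod_prime q).mp hq with ⟨P, hP, rfl⟩ | ⟨P, hP, rfl⟩
    · -- maximal ideal from the ℤ√2 factor
      have hPm : P.IsMaximal := isMaximal_prod_left (isMaximal_prod_right hm)
      obtain ⟨π, hπ⟩ := zsqrtd_principal (by norm_num) (by norm_num) hns2 P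
      have h2P : (2 : Zsqrtd 2) ∉ P := fun hc => h2 ⟨trivial, hc, trivial⟩
      have hre : ¬ Even π.re := by
        rintro ⟨r, hr⟩
        have hle : P ≤ Ideal.span {(⟨0,1⟩ : Zsqrtd 2)} := by
          rw [hπ]
          refine Ideal.span_le.mpr (Set.singleton_subset_iff.mpr
            (Ideal.mem_span_singleton.mpr ⟨⟨π.im, r⟩, ?_⟩))
          ext <;> simp [Zsqrtd.re_mul, Zsqrtd.im_mul] <;> omega
        have hne : Ideal.span {(⟨0,1⟩ : Zsqrtd 2)} ≠ ⊤ := by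
          rw [Ne, Ideal.span_singleton_eq_top]
          intro hu
          have h1 := Zsqrtd.norm_eq_one_iff.mpr hu
          simp [Zsqrtd.norm_def] at h1
        have hPe := hPm.eq_of_le hne hle
        apply h2P
        rw [hPe]
        exact Ideal.mem_span_singleton.mpr ⟨⟨0,1⟩, by ext <;> simp [Zsqrtd.re_mul, Zsqrtd.im_mul]⟩
      obtain ⟨r, hr⟩ := Int.not_even_iff_odd.mp hre
      obtain ⟨c, c', hcc', hc1, hc2⟩ :
          ∃ c c' : Zsqrtd 3, c * c' = 1 ∧ (1:ℤ) ≡ c.re + c.im [ZMOD 2] ∧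
            π.im ≡ c.im [ZMOD 2] := by
        by_cases h : Even π.im
        · obtain ⟨s, hs⟩ := h
          refine ⟨1, 1, mul_one 1, ?_, ?_⟩ <;>
            simp only [Zsqrtd.re_one, Zsqrtd.im_one] <;> rw [Int.modEq_iff_dvd] <;> omega
        · obtain ⟨s, hs⟩ := Int.not_even_iff_odd.mp h
          refine ⟨⟨2,1⟩, ⟨2,-1⟩, by ext <;> simp [Zsqrtd.re_mul, Zsqrtd.im_mul], ?_, ?_⟩
          · show (1:ℤ) ≡ 2 + 1 [ZMOD 2]
            rw [Int.modEq_iff_dvd]; omega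
          · show π.im ≡ 1 [ZMOD 2]
            rw [Int.modEq_iff_dvd]; omega
      refine ⟨((1, π, c) : Rng), ?_, ?_⟩
      · refine (mem_W_iff _).mpr ⟨?_, hc1, hc2⟩
        show (1:ℤ) ≡ π.re [ZMOD 2]
        rw [Int.modEq_iff_dvd]; omega
      · ext x
        rw [Ideal.mem_span_singleton]
        constructor
        · rintro ⟨-, h1, -⟩
          obtain ⟨t, ht⟩ := Ideal.mem_span_singleton.mp (hπ ▸ h1)
          refine ⟨(x.1, t, x.2.2 * c'), ?_⟩
          have hcx : c * (x.2.2 * c') = x.2.2 := by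
            rw [mul_comm x.2.2 c', ← mul_assoc, hcc', one_mul]
          simp [Prod.ext_iff, show x.2.1 = π * t from ht, hcx]
        · rintro ⟨t, ht⟩
          refine ⟨trivial, ?_, trivial⟩
          rw [hπ]
          exact Ideal.mem_span_singleton.mpr ⟨t.2.1, by simp [ht]⟩
    · -- maximal ideal from the ℤ√3 factor
      have hPm : P.IsMaximal := isMaximal_prod_right (isMaximal_prod_right hm)
      obtain ⟨π, hπ⟩ := zsqrtd_principal (by norm_num) (by norm_num) hns3 P
      have h2P : (2 : Zsqrtd 3) ∉ P := fun hc => h2 ⟨trivial, trivial, hc⟩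
      have hsum : ¬ Even (π.re + π.im) := by
        intro hev
        obtain ⟨k, hk⟩ := hev
        rcases Int.even_or_odd π.re with hre | hre
        · obtain ⟨r, hr⟩ := hre
          have hle : P ≤ Ideal.span {(2 : Zsqrtd 3)} := by
            rw [hπ]
            refine Ideal.span_le.mpr (Set.singleton_subset_iff.mpr
              (Ideal.mem_span_singleton.mpr ⟨⟨r, k - r⟩, ?_⟩))
            ext <;> simp [Zsqrtd.re_mul, Zsqrtd.im_mul] <;> omega
          have hne : Ideal.span {(2 : Zsqrtd 3)} ≠ ⊤ := by
            rw [Ne, Ideal.span_singleton_eq_top]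
            intro hu
            have h1 := Zsqrtd.norm_eq_one_iff.mpr hu
            simp [Zsqrtd.norm_def] at h1
          have hPe := hPm.eq_of_le hne hle
          exact h2P (hPe ▸ Ideal.mem_span_singleton_self 2)
        · obtain ⟨r, hr⟩ := hre
          have hle : P ≤ Ideal.span {(⟨1,1⟩ : Zsqrtd 3)} := by
            rw [hπ]
            refine Ideal.span_le.mpr (Set.singleton_subset_iff.mpr
              (Ideal.mem_span_singleton.mpr ⟨⟨3*k - 4*r - 2, 2*r - k + 1⟩, ?_⟩))
            ext <;> simp [Zsqrtd.re_mul, Zsqrtd.im_mul] <;> omega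
          have hne : Ideal.span {(⟨1,1⟩ : Zsqrtd 3)} ≠ ⊤ := by
            rw [Ne, Ideal.span_singleton_eq_top]
            intro hu
            have h1 := Zsqrtd.norm_eq_one_iff.mpr hu
            simp [Zsqrtd.norm_def] at h1
          have hPe := hPm.eq_of_le hne hle
          apply h2P
          rw [hPe]
          exact Ideal.mem_span_singleton.mpr ⟨⟨-1,1⟩, by ext <;> simp [Zsqrtd.re_mul, Zsqrtd.im_mul]⟩
      obtain ⟨k, hk⟩ := Int.not_even_iff_odd.mp hsum
      obtain ⟨b, b', hbb', hb1, hb2⟩ :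
          ∃ b b' : Zsqrtd 2, b * b' = 1 ∧ (1:ℤ) ≡ b.re [ZMOD 2] ∧
            b.im ≡ π.im [ZMOD 2] := by
        by_cases h : Even π.im
        · obtain ⟨s, hs⟩ := h
          refine ⟨1, 1, mul_one 1, ?_, ?_⟩ <;>
            simp only [Zsqrtd.re_one, Zsqrtd.im_one] <;> rw [Int.modEq_iff_dvd] <;> omega
        · obtain ⟨s, hs⟩ := Int.not_even_iff_odd.mp h
          refine ⟨⟨1,1⟩, ⟨-1,1⟩, by ext <;> simp [Zsqrtd.re_mul, Zsqrtd.im_mul], ?_, ?_⟩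
          · show (1:ℤ) ≡ 1 [ZMOD 2]
            rw [Int.modEq_iff_dvd]; omega
          · show (1:ℤ) ≡ π.im [ZMOD 2]
            rw [Int.modEq_iff_dvd]; omega
      refine ⟨((1, b, π) : Rng), ?_, ?_⟩
      · refine (mem_W_iff _).mpr ⟨hb1, ?_, hb2⟩
        show (1:ℤ) ≡ π.re + π.im [ZMOD 2]
        rw [Int.modEq_iff_dvd]; omega
      · ext x
        rw [Ideal.mem_span_singleton]
        constructor
        · rintro ⟨-, -, h1⟩
          obtain ⟨t, ht⟩ := Ideal.mem_span_singleton.mp (hπ ▸ h1)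
          refine ⟨(x.1, x.2.1 * b', t), ?_⟩
          have hbx : b * (x.2.1 * b') = x.2.1 := by
            rw [mul_comm x.2.1 b', ← mul_assoc, hbb', one_mul]
          simp [Prod.ext_iff, show x.2.2 = π * t from ht, hbx]
        · rintro ⟨t, ht⟩
          refine ⟨trivial, trivial, ?_⟩
          rw [hπ]
          exact Ideal.mem_span_singleton.mpr ⟨t.2.2, by simp [ht]⟩
end

section
/- For every integer n ≥ 1, the ideal m₂ⁿ (the n-th power of the ideal m₂ = {(a, b, c) ∈ W : a is even} in the ring W) is not a principal ideal of W. -/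
/-- The ideal `m₂ = {(a, b, c) ∈ W : a is even}` of `W`. -/
def m2 : Ideal W where
  carrier := {x | Even ((x : Rng).1)}
  zero_mem' := Even.zero
  add_mem' := fun hx hy => hx.add hy
  smul_mem' := fun c x hx => hx.mul_left ((c : Rng).1)


lemma mem_m2_iff (y : W) : y ∈ m2 ↔ Even ((y : Rng).1) := Iff.rfl

/-- The key invariant: divisibility of the first coordinate by `2^j` and of the
second coordinate by `√2^j` in `ℤ[√2]`. -/
abbrev Kprop (j : ℕ) (x : Rng) : Prop :=
  (2 : ℤ) ^ j ∣ x.1 ∧ (Zsqrtd.sqrtd : Zsqrtd 2) ^ j ∣ x.2.1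

lemma norm_sqrtd_pow (k : ℕ) :
    Zsqrtd.norm ((Zsqrtd.sqrtd : Zsqrtd 2) ^ k) = (-2) ^ k := by
  induction k with
  | zero => simp [Zsqrtd.norm]
  | succ k ih =>
      rw [pow_succ, Zsqrtd.norm_mul, ih, pow_succ]
      simp [Zsqrtd.norm]

lemma sqrtd_pow_not_dvd (n : ℕ) :
    ¬ ((Zsqrtd.sqrtd : Zsqrtd 2) ^ (n + 1) ∣ (Zsqrtd.sqrtd : Zsqrtd 2) ^ n) := by
  rintro ⟨t, ht⟩
  have h := congrArg Zsqrtd.norm ht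
  rw [Zsqrtd.norm_mul, norm_sqrtd_pow, norm_sqrtd_pow] at h
  have hdvd : ((-2 : ℤ)) ^ (n + 1) ∣ (-2) ^ n := ⟨t.norm, h⟩
  have hdvd2 : (2 : ℕ) ^ (n + 1) ∣ 2 ^ n := by
    have := Int.natAbs_dvd_natAbs.mpr hdvd
    simpa [Int.natAbs_pow] using this
  have := Nat.le_of_dvd (by positivity) hdvd2
  have h2 : (2 : ℕ) ^ n < 2 ^ (n + 1) := by
    exact Nat.pow_lt_pow_right (by norm_num) (Nat.lt_succ_self n)
  omega

lemma mem_m2_Kprop (x : W) (hx : x ∈ m2) : Kprop 1 (x : Rng) := by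
  obtain ⟨hw1, -, -⟩ := x.2
  obtain ⟨t, ht⟩ := hx
  have hbre : (2 : ℤ) ∣ (x : Rng).2.1.re := by
    have h1 : (x : Rng).1 % 2 = (x : Rng).2.1.re % 2 := hw1
    omega
  obtain ⟨s, hs⟩ := hbre
  constructor
  · exact ⟨t, by rw [pow_one]; omega⟩
  · refine ⟨⟨(x : Rng).2.1.im, s⟩, ?_⟩
    rw [pow_one]
    ext <;> simp [Zsqrtd.re_mul, Zsqrtd.im_mul, hs]

set_option synthInstance.maxHeartbeats 1000000 in
lemma pow_Kprop : ∀ (j : ℕ) (x : W), x ∈ (m2 ^ (j + 1) : Ideal W) → Kprop (j + 1) (x : Rng) := by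
  intro j
  induction j with
  | zero =>
      intro x hx
      rw [pow_one] at hx
      exact mem_m2_Kprop x hx
  | succ j ih =>
      intro x hx
      rw [pow_succ] at hx
      refine Submodule.mul_induction_on hx ?_ ?_
      · intro p hp q hq
        obtain ⟨h1, h2⟩ := ih p hp
        obtain ⟨g1, g2⟩ := mem_m2_Kprop q hq
        constructor
        · have : ((↑(p * q) : Rng)).1 = (p : Rng).1 * (q : Rng).1 := rfl
          rw [this, pow_succ]
          exact mul_dvd_mul h1 g1
        · have : ((↑(p * q) : Rng)).2.1 = (p : Rng).2.1 * (q : Rng).2.1 := rfl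
          rw [this, pow_succ]
          exact mul_dvd_mul h2 g2
      · intro a b ha hb
        exact ⟨dvd_add ha.1 hb.1, dvd_add ha.2 hb.2⟩

/-- The element `(2, 0, 0)` of `W`. -/
def pW : W := ⟨((2 : ℤ), (0 : Zsqrtd 2), (0 : Zsqrtd 3)), by
  refine ⟨?_, ?_, ?_⟩ <;> decide⟩

/-- The element `(0, √2, 1 + √3)` of `W`. -/
def qW : W := ⟨((0 : ℤ), (⟨0, 1⟩ : Zsqrtd 2), (⟨1, 1⟩ : Zsqrtd 3)), by
  refine ⟨?_, ?_, ?_⟩ <;> decide⟩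

lemma pW_mem : pW ∈ m2 := ⟨1, rfl⟩

lemma qW_mem : qW ∈ m2 := ⟨0, rfl⟩

lemma coe_pow_fst (x : W) (k : ℕ) : ((↑(x ^ k) : Rng)).1 = ((x : Rng).1) ^ k := by
  induction k with
  | zero => rfl
  | succ k ih =>
      rw [pow_succ, pow_succ, ← ih]
      rfl

lemma coe_pow_snd (x : W) (k : ℕ) : ((↑(x ^ k) : Rng)).2.1 = ((x : Rng).2.1) ^ k := by
  induction k with
  | zero => rfl
  | succ k ih =>
      rw [pow_succ, pow_succ, ← ih]
      rfl

lemma two_pow_not_dvd (n : ℕ) : ¬ ((2 : ℤ) ^ (n + 2) ∣ 2 ^ (n + 1)) := by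
  intro h
  have := Int.le_of_dvd (by positivity) h
  have h2 : (2 : ℤ) ^ (n + 1) < 2 ^ (n + 2) := by
    have := pow_lt_pow_right₀ (a := (2:ℤ)) (by norm_num) (Nat.lt_succ_self (n+1))
    exact_mod_cast this
  omega

/-- For every `n ≥ 1`, the `n`-th power of the ideal `m₂` of `W` is not principal. -/
theorem stmt8 : ∀ n : ℕ, 1 ≤ n → ¬ (m2 ^ n).IsPrincipal := by
  intro n hn
  obtain ⟨m, rfl⟩ : ∃ m, n = m + 1 := ⟨n - 1, by omega⟩
  rintro ⟨g, hg⟩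
  have hgmem : g ∈ m2 ^ (m + 1) := by
    rw [hg]; exact Ideal.mem_span_singleton_self g
  have hx1 : pW ^ (m + 1) ∈ m2 ^ (m + 1) := Ideal.pow_mem_pow pW_mem _
  have hx2 : qW ^ (m + 1) ∈ m2 ^ (m + 1) := Ideal.pow_mem_pow qW_mem _
  rw [hg] at hx1 hx2
  obtain ⟨w1, hw1⟩ := Ideal.mem_span_singleton'.mp hx1
  obtain ⟨w2, hw2⟩ := Ideal.mem_span_singleton'.mp hx2
  have key : ∀ w : W, w ∈ m2 → Kprop (m + 2) ((w * g : W) : Rng) := by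
    intro w hw
    have hmem : w * g ∈ m2 ^ (m + 2) := by
      have := Ideal.mul_mem_mul hw hgmem
      rwa [show m2 * m2 ^ (m + 1) = m2 ^ (m + 2) from (mul_comm _ _).trans (pow_succ m2 (m + 1)).symm] at this
    exact pow_Kprop (m + 1) _ hmem
  have c1 : ((↑(pW ^ (m + 1)) : Rng)).1 = 2 ^ (m + 1) := by
    rw [coe_pow_fst]; rfl
  have c2 : ((↑(qW ^ (m + 1)) : Rng)).2.1 = (Zsqrtd.sqrtd : Zsqrtd 2) ^ (m + 1) := by
    rw [coe_pow_snd]; rfl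
  have c1' : ((↑(pW ^ (m + 1)) : Rng)).2.1 = 0 := by
    rw [coe_pow_snd]
    show (0 : Zsqrtd 2) ^ (m + 1) = 0
    exact zero_pow (by omega)
  rcases Int.even_or_odd ((w1 : Rng).1) with he1 | ho1
  · obtain ⟨hk1, -⟩ := key w1 he1
    rw [hw1, c1] at hk1
    exact two_pow_not_dvd m hk1
  rcases Int.even_or_odd ((w2 : Rng).1) with he2 | ho2
  · obtain ⟨-, hk2⟩ := key w2 he2
    rw [hw2, c2] at hk2
    exact sqrtd_pow_not_dvd (m + 1) hk2
  · have hsub : w1 - w2 ∈ m2 := by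
      rw [mem_m2_iff]
      have : ((↑(w1 - w2) : Rng)).1 = (w1 : Rng).1 - (w2 : Rng).1 := rfl
      rw [this]
      exact Odd.sub_odd ho1 ho2
    obtain ⟨-, hk2⟩ := key _ hsub
    have heq : (w1 - w2) * g = pW ^ (m + 1) - qW ^ (m + 1) := by
      rw [sub_mul, hw1, hw2]
    rw [heq] at hk2
    have hc : ((↑(pW ^ (m + 1) - qW ^ (m + 1)) : Rng)).2.1
        = -((Zsqrtd.sqrtd : Zsqrtd 2) ^ (m + 1)) := by
      have : ((↑(pW ^ (m + 1) - qW ^ (m + 1)) : Rng)).2.1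
          = ((↑(pW ^ (m + 1)) : Rng)).2.1 - ((↑(qW ^ (m + 1)) : Rng)).2.1 := rfl
      rw [this, c1', c2, zero_sub]
    rw [hc] at hk2
    exact sqrtd_pow_not_dvd (m + 1) ((dvd_neg).mp hk2)
end
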